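/- Let 0 < α ≤ 1, let s be a positive integer with √s > α, and let k ≥ 4α²/(√s − α)² be such that ks is a positive integer. Then a(s,ks;α) = (√(ks) − α)/(√s + α) ≥ √k/2 > 1, and if the (ℓ₂,ℓ₁)-RIP constants of A ∈ ℝ^{m×n} satisfy δ_{ks}^{ub} + (√k/2)·δ_{(k+1)s}^{lb} < √k/2 − 1, then δ_{ks}^{ub} + a(s,ks;α)·δ_{(k+1)s}^{lb} < a(s,ks;α) − 1; consequently any s-sparse x with b = Ax is the unique minimizer of ‖·‖₁ − α‖·‖₂ subject to Az = b. -/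

import Mathlib

open Finset

/-- The ℓ₁ norm of a vector in `ℝⁿ`. -/
noncomputable def l1norm {n : ℕ} (x : Fin n → ℝ) : ℝ := ∑ i, |x i|

/-- The ℓ₂ norm of a vector in `ℝⁿ`. -/
noncomputable def l2norm {n : ℕ} (x : Fin n → ℝ) : ℝ := Real.sqrt (∑ i, (x i) ^ 2)

/-- The restriction `x_S` of a vector `x` to an index set `S` (equal to `x` on `S`, zero
outside `S`). -/
def restr {n : ℕ} (x : Fin n → ℝ) (S : Finset (Fin n)) : Fin n → ℝ :=
  fun i => if i ∈ S then x i else 0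

/-- `T` is an index set of the `s` largest-magnitude entries of `x` among the indices in `S`. -/
def IsMaxIdxOn {n : ℕ} (x : Fin n → ℝ) (s : ℕ) (T S : Finset (Fin n)) : Prop :=
  T ⊆ S ∧ T.card = s ∧ ∀ i ∈ T, ∀ j ∈ S \ T, |x j| ≤ |x i|

/-- `T` is an index set of the `s` largest-magnitude entries of `x`. -/
def IsMaxIdx {n : ℕ} (x : Fin n → ℝ) (s : ℕ) (T : Finset (Fin n)) : Prop :=
  IsMaxIdxOn x s T Finset.univ

/-- A vector is `r`-sparse: it has at most `r` nonzero entries. -/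
def Sparse {n : ℕ} (r : ℕ) (v : Fin n → ℝ) : Prop :=
  ∃ S : Finset (Fin n), S.card ≤ r ∧ ∀ i ∉ S, v i = 0

lemma l2norm_nonneg {n : ℕ} (x : Fin n → ℝ) : 0 ≤ l2norm x := Real.sqrt_nonneg _

lemma l2norm_sq {n : ℕ} (x : Fin n → ℝ) : l2norm x ^ 2 = ∑ i, x i ^ 2 :=
  Real.sq_sqrt (Finset.sum_nonneg fun i _ => sq_nonneg _)

lemma l2norm_eq_norm {n : ℕ} (x : Fin n → ℝ) :
    l2norm x = ‖(WithLp.equiv 2 (Fin n → ℝ)).symm x‖ := by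
  rw [EuclideanSpace.norm_eq]
  simp [l2norm, Real.norm_eq_abs, sq_abs]

lemma l2norm_add_le {n : ℕ} (x y : Fin n → ℝ) : l2norm (x + y) ≤ l2norm x + l2norm y := by
  simp only [l2norm_eq_norm]
  have : (WithLp.equiv 2 (Fin n → ℝ)).symm (x + y)
      = (WithLp.equiv 2 (Fin n → ℝ)).symm x + (WithLp.equiv 2 (Fin n → ℝ)).symm y := rfl
  rw [this]
  exact norm_add_le _ _

lemma sum_restr {n : ℕ} (f : ℝ → ℝ) (hf0 : f 0 = 0) (h : Fin n → ℝ) (S : Finset (Fin n)) :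
    ∑ i, f (restr h S i) = ∑ i ∈ S, f (h i) := by
  rw [← Finset.sum_subset (Finset.subset_univ S)
    (fun i _ hi => by rw [restr, if_neg hi, hf0])]
  exact Finset.sum_congr rfl fun i hi => by rw [restr, if_pos hi]

lemma l2norm_restr_sq {n : ℕ} (h : Fin n → ℝ) (S : Finset (Fin n)) :
    l2norm (restr h S) ^ 2 = ∑ i ∈ S, h i ^ 2 := by
  rw [l2norm_sq]
  exact sum_restr (fun t => t ^ 2) (by norm_num) h S

lemma l1norm_restr {n : ℕ} (h : Fin n → ℝ) (S : Finset (Fin n)) :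
    l1norm (restr h S) = ∑ i ∈ S, |h i| := by
  rw [l1norm]; exact sum_restr (fun t => |t|) abs_zero h S

lemma l2norm_restr_mono {n : ℕ} (h : Fin n → ℝ) {S T : Finset (Fin n)} (hST : S ⊆ T) :
    l2norm (restr h S) ≤ l2norm (restr h T) := by
  have hle : ∑ i, (restr h S i) ^ 2 ≤ ∑ i, (restr h T i) ^ 2 := by
    rw [sum_restr (fun t => t ^ 2) (by norm_num) h S,
      sum_restr (fun t => t ^ 2) (by norm_num) h T]
    exact Finset.sum_le_sum_of_subset_of_nonneg hST fun i _ _ => sq_nonneg _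
  unfold l2norm
  exact Real.sqrt_le_sqrt hle

lemma l2norm_eq_zero {n : ℕ} {x : Fin n → ℝ} (hx : l2norm x = 0) : ∀ i, x i = 0 := by
  intro i
  have h1 : ∑ j, x j ^ 2 = 0 := by
    have := l2norm_sq x; rw [hx] at this; linarith [this]
  have := (Finset.sum_eq_zero_iff_of_nonneg (fun j _ => sq_nonneg (x j))).mp h1 i (mem_univ i)
  exact pow_eq_zero_iff (by norm_num) |>.mp this

lemma l1norm_add_le {n : ℕ} (x y : Fin n → ℝ) : l1norm (x + y) ≤ l1norm x + l1norm y := by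
  rw [l1norm, l1norm, l1norm, ← Finset.sum_add_distrib]
  exact Finset.sum_le_sum fun i _ => abs_add_le _ _

lemma l1norm_neg {n : ℕ} (x : Fin n → ℝ) : l1norm (-x) = l1norm x := by
  simp [l1norm]

lemma exists_maxidx {n : ℕ} (h : Fin n → ℝ) (R : Finset (Fin n)) :
    ∀ t : ℕ, t ≤ R.card → ∃ T : Finset (Fin n), T ⊆ R ∧ T.card = t ∧
      ∀ i ∈ T, ∀ j ∈ R \ T, |h j| ≤ |h i| := by
  intro t
  induction t with
  | zero => exact fun _ => ⟨∅, by simp⟩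
  | succ t ih =>
    intro ht
    obtain ⟨T, hTR, hTcard, hTmax⟩ := ih (Nat.le_of_succ_le ht)
    have hne : (R \ T).Nonempty := by
      rw [← Finset.card_pos, Finset.card_sdiff_of_subset hTR]; omega
    obtain ⟨j₀, hj₀, hj₀max⟩ := Finset.exists_max_image (R \ T) (fun i => |h i|) hne
    refine ⟨insert j₀ T, ?_, ?_, ?_⟩
    · exact Finset.insert_subset (Finset.mem_sdiff.mp hj₀).1 hTR
    · rw [Finset.card_insert_of_notMem (Finset.mem_sdiff.mp hj₀).2, hTcard]
    · intro i hi j hj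
      have hjT : j ∈ R \ T := by
        rw [Finset.mem_sdiff] at hj ⊢
        exact ⟨hj.1, fun hjT => hj.2 (Finset.mem_insert_of_mem hjT)⟩
      rcases Finset.mem_insert.mp hi with rfl | hiT
      · exact hj₀max j hjT
      · exact hTmax i hiT j hjT

lemma restr_sdiff_add {n : ℕ} (h : Fin n → ℝ) {T R : Finset (Fin n)} (hTR : T ⊆ R) :
    restr h R = restr h T + restr h (R \ T) := by
  funext i
  simp only [restr, Pi.add_apply, Finset.mem_sdiff]
  by_cases hiT : i ∈ T
  · simp [hiT, hTR hiT]
  · by_cases hiR : i ∈ R <;> simp [hiT, hiR]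

lemma key_lemma {n m : ℕ} (A : Matrix (Fin m) (Fin n) ℝ) (δub : ℝ) (hδub : 0 ≤ δub)
    (ks : ℕ) (hks : 0 < ks)
    (hRIPub : ∀ v : Fin n → ℝ, Sparse ks v → l1norm (A.mulVec v) ≤ (1 + δub) * l2norm v)
    (h : Fin n → ℝ) :
    ∀ R : Finset (Fin n), ∀ μ : ℝ, 0 ≤ μ → (∀ i ∈ R, |h i| ≤ μ) →
      l1norm (A.mulVec (restr h R)) ≤
        (1 + δub) * (Real.sqrt ks * μ + (∑ i ∈ R, |h i|) / Real.sqrt ks) := by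
  have hks0 : (0 : ℝ) < ks := by exact_mod_cast hks
  have hsq : (0 : ℝ) < Real.sqrt ks := Real.sqrt_pos.mpr hks0
  have hsqsq : Real.sqrt ks * Real.sqrt ks = (ks : ℝ) := Real.mul_self_sqrt hks0.le
  intro R
  induction R using Finset.strongInduction with
  | _ R ih =>
    intro μ hμ hμbound
    have hsum_nonneg : (0:ℝ) ≤ ∑ i ∈ R, |h i| := Finset.sum_nonneg fun i _ => abs_nonneg _
    by_cases hcard : R.card ≤ ks
    · -- small case: restr h R is ks-sparse
      have hsp : Sparse ks (restr h R) := ⟨R, hcard, fun i hi => if_neg hi⟩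
      have h1 := hRIPub _ hsp
      have h2 : l2norm (restr h R) ≤ Real.sqrt ks * μ + (∑ i ∈ R, |h i|) / Real.sqrt ks := by
        have hsq2 : l2norm (restr h R) ^ 2 ≤ (Real.sqrt ks * μ) * ((∑ i ∈ R, |h i|) / Real.sqrt ks) * (Real.sqrt ks / Real.sqrt ks) := by
          rw [div_self hsq.ne', mul_one, l2norm_restr_sq]
          have : ∑ i ∈ R, h i ^ 2 ≤ ∑ i ∈ R, μ * |h i| := by
            refine Finset.sum_le_sum fun i hi => ?_
            have := hμbound i hi
            nlinarith [abs_nonneg (h i), sq_abs (h i)]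
          calc ∑ i ∈ R, h i ^ 2 ≤ μ * ∑ i ∈ R, |h i| := by
                rw [Finset.mul_sum]; exact this
            _ = Real.sqrt ks * μ * ((∑ i ∈ R, |h i|) / Real.sqrt ks) := by
                field_simp
        set a1 := Real.sqrt ks * μ with ha1
        set b1 := (∑ i ∈ R, |h i|) / Real.sqrt ks with hb1
        have ha1n : 0 ≤ a1 := by positivity
        have hb1n : 0 ≤ b1 := by positivity
        rw [div_self hsq.ne', mul_one] at hsq2
        nlinarith [l2norm_nonneg (restr h R), sq_nonneg (a1 - b1), sq_nonneg (l2norm (restr h R) - (a1 + b1))]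
      calc l1norm (A.mulVec (restr h R)) ≤ (1 + δub) * l2norm (restr h R) := h1
        _ ≤ _ := by nlinarith
    · -- big case
      push_neg at hcard
      obtain ⟨T, hTR, hTcard, hTmax⟩ := exists_maxidx h R ks hcard.le
      have hTne : T.Nonempty := Finset.card_pos.mp (by omega)
      obtain ⟨i₀, hi₀, hi₀min⟩ := Finset.exists_min_image T (fun i => |h i|) hTne
      set μ' := |h i₀| with hμ'
      have hμ'0 : 0 ≤ μ' := abs_nonneg _
      have hμ'le : μ' ≤ μ := hμbound i₀ (hTR hi₀)
      have hksμ' : (ks : ℝ) * μ' ≤ ∑ i ∈ T, |h i| := by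
        calc (ks : ℝ) * μ' = ∑ _i ∈ T, μ' := by rw [Finset.sum_const, hTcard]; ring
          _ ≤ ∑ i ∈ T, |h i| := Finset.sum_le_sum fun i hi => hi₀min i hi
      have hsplit := restr_sdiff_add h hTR
      have hssub : R \ T ⊂ R := Finset.sdiff_ssubset hTR hTne
      have hIH := ih (R \ T) hssub μ' hμ'0 (fun j hj => hTmax i₀ hi₀ j hj)
      -- first block bound
      have hspT : Sparse ks (restr h T) := ⟨T, hTcard.le, fun i hi => if_neg hi⟩
      have hT2 : l2norm (restr h T) ≤ Real.sqrt ks * μ := by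
        have : l2norm (restr h T) ^ 2 ≤ (Real.sqrt ks * μ) ^ 2 := by
          rw [l2norm_restr_sq, mul_pow, Real.sq_sqrt hks0.le]
          calc ∑ i ∈ T, h i ^ 2 ≤ ∑ _i ∈ T, μ ^ 2 := by
                refine Finset.sum_le_sum fun i hi => ?_
                have := hμbound i (hTR hi)
                nlinarith [abs_nonneg (h i), sq_abs (h i)]
            _ = (ks : ℝ) * μ ^ 2 := by rw [Finset.sum_const, hTcard]; ring
        nlinarith [l2norm_nonneg (restr h T), Real.sqrt_nonneg (ks:ℝ), mul_nonneg hsq.le hμ]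
      have hT1 := hRIPub _ hspT
      have htri : l1norm (A.mulVec (restr h R)) ≤
          l1norm (A.mulVec (restr h T)) + l1norm (A.mulVec (restr h (R \ T))) := by
        rw [hsplit, Matrix.mulVec_add]
        exact l1norm_add_le _ _
      have hμ'div : Real.sqrt ks * μ' ≤ (∑ i ∈ T, |h i|) / Real.sqrt ks := by
        rw [le_div_iff₀ hsq]
        calc Real.sqrt ks * μ' * Real.sqrt ks = (ks : ℝ) * μ' := by
              rw [mul_comm (Real.sqrt ks * μ')]; rw [← mul_assoc, hsqsq]
          _ ≤ _ := hksμ'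
      have hsum : ∑ i ∈ R \ T, |h i| + ∑ i ∈ T, |h i| = ∑ i ∈ R, |h i| :=
        Finset.sum_sdiff hTR
      calc l1norm (A.mulVec (restr h R))
          ≤ l1norm (A.mulVec (restr h T)) + l1norm (A.mulVec (restr h (R \ T))) := htri
        _ ≤ (1 + δub) * (Real.sqrt ks * μ) +
            (1 + δub) * (Real.sqrt ks * μ' + (∑ i ∈ R \ T, |h i|) / Real.sqrt ks) := by
            have := hT1.trans (mul_le_mul_of_nonneg_left hT2 (by linarith))
            linarith
        _ ≤ (1 + δub) * (Real.sqrt ks * μ + (∑ i ∈ R, |h i|) / Real.sqrt ks) := by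
            have h3 : (∑ i ∈ T, |h i|) / Real.sqrt ks + (∑ i ∈ R \ T, |h i|) / Real.sqrt ks
                = (∑ i ∈ R, |h i|) / Real.sqrt ks := by
              rw [← add_div, add_comm, hsum]
            nlinarith [hμ'div]

lemma le_of_sq_le_sq' {a b : ℝ} (hb : 0 ≤ b) (h : a ^ 2 ≤ b ^ 2) : a ≤ b := by
  nlinarith [sq_nonneg (a - b), sq_nonneg (a + b)]

lemma aux_mu_Y2 {ks μ Y1 Y2 Y : ℝ} (hks : 0 < ks) (hμ : 0 ≤ μ) (h1 : ks * μ ≤ Y1)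
    (h2 : Y2 + Y1 = Y) (hY1 : 0 ≤ Y1) (hY2 : 0 ≤ Y2) : μ * Y2 ≤ Y ^ 2 / ks := by
  rw [le_div_iff₀ hks]
  nlinarith [mul_le_mul_of_nonneg_right h1 hY2, mul_nonneg hY1 hY2, sq_nonneg Y1, sq_nonneg Y2]

set_option maxHeartbeats 1000000 in
/-- Remark: simpler sufficient condition.  Let `0 < α ≤ 1`, `s` a positive
integer with `√s > α`, and `k ≥ 4α²/(√s − α)²` such that `ks ∈ ℤ₊`.  Then
`a(s,ks;α) = (√(ks) − α)/(√s + α) ≥ √k/2 > 1`; moreover, if the (ℓ₂,ℓ₁)-RIP constants of `A`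
satisfy `δ_{ks}^{ub} + (√k/2)·δ_{(k+1)s}^{lb} < √k/2 − 1` then
`δ_{ks}^{ub} + a(s,ks;α)·δ_{(k+1)s}^{lb} < a(s,ks;α) − 1`, and consequently any `s`-sparse `x`
with `b = Ax` is the unique minimizer of `‖·‖₁ − α‖·‖₂` subject to `Az = b`. -/
theorem stmt6 {n m : ℕ} (α : ℝ) (hα0 : 0 < α) (hα1 : α ≤ 1)
    (s : ℕ) (hs : 0 < s) (hαs : α < Real.sqrt s)
    (k : ℝ) (hk : 4 * α ^ 2 / (Real.sqrt s - α) ^ 2 ≤ k)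
    (ks : ℕ) (hks : 0 < ks) (hksk : (ks : ℝ) = k * s)
    (a : ℝ) (ha_def : a = (Real.sqrt (ks : ℝ) - α) / (Real.sqrt s + α))
    (A : Matrix (Fin m) (Fin n) ℝ) (δlb δub : ℝ) (hδlb : 0 ≤ δlb) (hδub : 0 ≤ δub)
    (hRIPlb : ∀ v : Fin n → ℝ, Sparse (ks + s) v →
      (1 - δlb) * l2norm v ≤ l1norm (A.mulVec v))
    (hRIPub : ∀ v : Fin n → ℝ, Sparse ks v →
      l1norm (A.mulVec v) ≤ (1 + δub) * l2norm v)
    (hcond : δub + (Real.sqrt k / 2) * δlb < Real.sqrt k / 2 - 1) :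
    Real.sqrt k / 2 ≤ a ∧ 1 < Real.sqrt k / 2 ∧
    δub + a * δlb < a - 1 ∧
    ∀ x : Fin n → ℝ, Sparse s x → ∀ b : Fin m → ℝ, b = A.mulVec x →
      ∀ xhat : Fin n → ℝ, A.mulVec xhat = b →
        l1norm xhat - α * l2norm xhat ≤ l1norm x - α * l2norm x → xhat = x := by
  -- scalar part
  have hsqk2 : 1 < Real.sqrt k / 2 := by
    nlinarith [Real.sqrt_nonneg k, mul_nonneg (Real.sqrt_nonneg k) hδlb]
  have hsqk : 2 < Real.sqrt k := by linarith
  have hk0 : 0 < k := Real.sqrt_pos.mp (by linarith)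
  have hs0 : (0:ℝ) < Real.sqrt s := lt_trans hα0 hαs
  have hsma : (0:ℝ) < Real.sqrt s - α := by linarith
  have hsa : (0:ℝ) < Real.sqrt s + α := by linarith
  have hsqks_eq : Real.sqrt (ks : ℝ) = Real.sqrt k * Real.sqrt s := by
    rw [hksk, Real.sqrt_mul hk0.le]
  have h2a : 2 * α ≤ Real.sqrt k * (Real.sqrt s - α) := by
    have h1 : (2 * α / (Real.sqrt s - α)) ^ 2 ≤ k := by
      calc (2 * α / (Real.sqrt s - α)) ^ 2 = 4 * α ^ 2 / (Real.sqrt s - α) ^ 2 := by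
            rw [div_pow]; ring_nf
        _ ≤ k := hk
    have hnn : (0:ℝ) ≤ 2 * α / (Real.sqrt s - α) := by positivity
    have h2 : 2 * α / (Real.sqrt s - α) ≤ Real.sqrt k := (Real.le_sqrt hnn hk0.le).mpr h1
    calc 2 * α = (2 * α / (Real.sqrt s - α)) * (Real.sqrt s - α) := by field_simp
      _ ≤ Real.sqrt k * (Real.sqrt s - α) := by
          exact mul_le_mul_of_nonneg_right h2 hsma.le
  have ha2 : Real.sqrt k / 2 ≤ a := by
    rw [ha_def, hsqks_eq, le_div_iff₀ hsa]
    nlinarith [h2a]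
  have ha1 : 1 < a := lt_of_lt_of_le hsqk2 ha2
  have hδlb1 : δlb < 1 := by nlinarith
  have hthird : δub + a * δlb < a - 1 := by
    nlinarith [mul_nonneg (sub_nonneg.mpr ha2) (sub_nonneg.mpr hδlb1.le)]
  refine ⟨ha2, hsqk2, hthird, ?_⟩
  intro x hxsp b hb xhat hAxhat hobj
  obtain ⟨S, hScard, hSzero⟩ := hxsp
  set h : Fin n → ℝ := fun i => xhat i - x i with hh
  have hAh : A.mulVec h = 0 := by
    have : h = xhat - x := rfl
    rw [this, Matrix.mulVec_sub, hAxhat, hb, sub_self]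
  have hl1Ah : l1norm (A.mulVec h) = 0 := by rw [hAh]; simp [l1norm]
  suffices hzero : ∀ i, h i = 0 by
    funext i
    have := hzero i
    simp only [hh] at this
    linarith
  set Rall : Finset (Fin n) := Finset.univ \ S with hRall
  -- basic constants
  have hks0 : (0:ℝ) < (ks:ℕ) := by exact_mod_cast hks
  set c : ℝ := Real.sqrt (ks : ℝ) with hc
  have hc_pos : 0 < c := Real.sqrt_pos.mpr hks0
  have hcsq : c * c = (ks : ℝ) := Real.mul_self_sqrt hks0.le
  have hcα : α < c := by
    rw [hsqks_eq]; nlinarith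
  by_cases hRc : Rall.card ≤ ks
  · -- easy case : h itself is (ks+s)-sparse
    have hcardu : (Finset.univ : Finset (Fin n)).card ≤ ks + s := by
      calc (Finset.univ : Finset (Fin n)).card = (S ∪ Rall).card := by
            rw [Finset.union_sdiff_of_subset (Finset.subset_univ S)]
        _ ≤ S.card + Rall.card := Finset.card_union_le _ _
        _ ≤ ks + s := by omega
    have hsp : Sparse (ks + s) h :=
      ⟨Finset.univ, hcardu, fun i hi => absurd (Finset.mem_univ i) hi⟩
    have hlb := hRIPlb h hsp
    rw [hl1Ah] at hlb
    have hl2 : l2norm h = 0 := by nlinarith [l2norm_nonneg h]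
    exact l2norm_eq_zero hl2
  · push_neg at hRc
    obtain ⟨T₁, hT₁R, hT₁card, hT₁max⟩ := exists_maxidx h Rall ks hRc.le
    have hT₁ne : T₁.Nonempty := Finset.card_pos.mp (by omega)
    obtain ⟨i₀, hi₀, hi₀min⟩ := Finset.exists_min_image T₁ (fun i => |h i|) hT₁ne
    set μ : ℝ := |h i₀| with hμdef
    have hμ0 : 0 ≤ μ := abs_nonneg _
    set u : Fin n → ℝ := restr h (S ∪ T₁) with hu
    set v : Fin n → ℝ := restr h (Rall \ T₁) with hv
    set X : ℝ := l2norm u with hX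
    set Y : ℝ := ∑ i ∈ Rall, |h i| with hY
    set Y1 : ℝ := ∑ i ∈ T₁, |h i| with hY1
    set Y2 : ℝ := ∑ i ∈ Rall \ T₁, |h i| with hY2
    have hY12 : Y2 + Y1 = Y := Finset.sum_sdiff hT₁R
    have hXn : 0 ≤ X := l2norm_nonneg u
    have hYn : 0 ≤ Y := Finset.sum_nonneg fun i _ => abs_nonneg _
    have hY1n : 0 ≤ Y1 := Finset.sum_nonneg fun i _ => abs_nonneg _
    have hY2n : 0 ≤ Y2 := Finset.sum_nonneg fun i _ => abs_nonneg _
    have hST₁ : ∀ i ∈ T₁, i ∉ S := fun i hi => (Finset.mem_sdiff.mp (hT₁R hi)).2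
    have huv : h = u + v := by
      funext i
      simp only [hu, hv, restr, Pi.add_apply, Finset.mem_union, Finset.mem_sdiff, hRall,
        Finset.mem_univ, true_and]
      by_cases hiS : i ∈ S
      · have hiT : i ∉ T₁ := fun hT => hST₁ i hT hiS
        simp [hiS, hiT]
      · by_cases hiT : i ∈ T₁ <;> simp [hiS, hiT]
    -- objective inequality : Y ≤ ∑_S |h| + α * l2norm h
    have hxhx : xhat = x + h := by funext i; simp [hh]
    have hxl1 : l1norm x = ∑ i ∈ S, |x i| :=
      (Finset.sum_subset (Finset.subset_univ S)
        (fun i _ hi => by rw [hSzero i hi, abs_zero])).symm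
    have hxhat_split : l1norm xhat = ∑ i ∈ S, |xhat i| + Y := by
      rw [l1norm, ← Finset.sum_sdiff (Finset.subset_univ S)]
      have hR : ∑ i ∈ Finset.univ \ S, |xhat i| = Y := by
        rw [hY]
        refine Finset.sum_congr rfl fun i hi => ?_
        have hx0 : x i = 0 := hSzero i (Finset.mem_sdiff.mp hi).2
        simp [hh, hx0]
      rw [hR]; ring
    have hS_lb : ∑ i ∈ S, |x i| - ∑ i ∈ S, |h i| ≤ ∑ i ∈ S, |xhat i| := by
      rw [← Finset.sum_sub_distrib]
      refine Finset.sum_le_sum fun i hi => ?_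
      have h1 : |x i| ≤ |xhat i| + |h i| := by
        have : x i = xhat i - h i := by simp [hh]
        rw [this]
        exact abs_sub _ _
      linarith
    have hl2xhat : l2norm xhat ≤ l2norm x + l2norm h := by
      rw [hxhx]; exact l2norm_add_le x h
    have hobj2 : Y ≤ ∑ i ∈ S, |h i| + α * l2norm h := by
      have hαl2 : α * l2norm xhat ≤ α * (l2norm x + l2norm h) :=
        mul_le_mul_of_nonneg_left hl2xhat hα0.le
      linarith [hobj, hxhat_split, hS_lb, hxl1, hαl2]
    -- Cauchy–Schwarz : ∑_S |h| ≤ √s * X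
    have hSh : ∑ i ∈ S, |h i| ≤ Real.sqrt s * X := by
      have hcs := Finset.sum_mul_sq_le_sq_mul_sq S (fun _ => (1:ℝ)) (fun i => |h i|)
      simp only [one_pow, one_mul, sq_abs] at hcs
      have hsum1 : ∑ _i ∈ S, (1:ℝ) = (S.card : ℝ) := by
        rw [Finset.sum_const]; simp
      rw [hsum1] at hcs
      have h2 : ∑ i ∈ S, h i ^ 2 = l2norm (restr h S) ^ 2 := (l2norm_restr_sq h S).symm
      have h3 : l2norm (restr h S) ≤ X := by
        rw [hX, hu]; exact l2norm_restr_mono h Finset.subset_union_left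
      have hcard : (S.card : ℝ) ≤ (s:ℕ) := by exact_mod_cast hScard
      have h4 : l2norm (restr h S) ^ 2 ≤ X ^ 2 :=
        pow_le_pow_left₀ (l2norm_nonneg _) h3 2
      have hsq : (∑ i ∈ S, |h i|) ^ 2 ≤ (Real.sqrt s * X) ^ 2 := by
        rw [mul_pow, Real.sq_sqrt (by positivity : (0:ℝ) ≤ (s:ℕ))]
        calc (∑ i ∈ S, |h i|) ^ 2 ≤ (S.card : ℝ) * ∑ i ∈ S, h i ^ 2 := hcs
          _ = (S.card : ℝ) * l2norm (restr h S) ^ 2 := by rw [h2]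
          _ ≤ (s:ℕ) * X ^ 2 := mul_le_mul hcard h4 (by positivity) (by positivity)
      exact le_of_sq_le_sq' (mul_nonneg (Real.sqrt_nonneg _) hXn) hsq
    -- bounds from the max/min structure
    have hμY1 : (ks : ℝ) * μ ≤ Y1 := by
      calc (ks : ℝ) * μ = ∑ _i ∈ T₁, μ := by rw [Finset.sum_const, hT₁card]; ring
        _ ≤ Y1 := Finset.sum_le_sum fun i hi => hi₀min i hi
    have hμRT : ∀ j ∈ Rall \ T₁, |h j| ≤ μ := fun j hj => hT₁max i₀ hi₀ j hj
    -- (c) l2norm v ≤ Y / c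
    have hvsq : l2norm v ^ 2 ≤ Y ^ 2 / (ks : ℝ) := by
      rw [hv, l2norm_restr_sq]
      have h1 : ∑ i ∈ Rall \ T₁, h i ^ 2 ≤ μ * Y2 := by
        rw [hY2, Finset.mul_sum]
        refine Finset.sum_le_sum fun i hi => ?_
        calc h i ^ 2 = |h i| * |h i| := by rw [← sq_abs]; ring
          _ ≤ μ * |h i| := mul_le_mul_of_nonneg_right (hμRT i hi) (abs_nonneg _)
      have h2 : μ * Y2 ≤ Y ^ 2 / (ks : ℝ) :=
        aux_mu_Y2 hks0 hμ0 hμY1 hY12 hY1n hY2n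
      linarith
    have hv2 : l2norm v ≤ Y / c := by
      have h0 : (Y / c) ^ 2 = Y ^ 2 / (ks : ℝ) := by
        rw [div_pow, hc, Real.sq_sqrt hks0.le]
      have h1 : 0 ≤ Y / c := div_nonneg hYn hc_pos.le
      exact le_of_sq_le_sq' h1 (by rw [h0]; exact hvsq)
    have hl2h : l2norm h ≤ X + l2norm v := by
      rw [huv]; exact l2norm_add_le u v
    -- (e) (c - α) Y ≤ c (√s + α) X
    have hY' : Y ≤ Real.sqrt s * X + α * X + α * (Y / c) := by
      have h1 : α * l2norm h ≤ α * X + α * (Y / c) := by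
        have h1a : l2norm h ≤ X + Y / c := by linarith [hl2h, hv2]
        have h1b := mul_le_mul_of_nonneg_left h1a hα0.le
        linarith [h1b]
      linarith [hobj2, hSh]
    have hYX : (c - α) * Y ≤ c * (Real.sqrt s + α) * X := by
      have h1 := mul_le_mul_of_nonneg_left hY' hc_pos.le
      have h2 : c * (Real.sqrt s * X + α * X + α * (Y / c)) =
          c * (Real.sqrt s + α) * X + α * Y := by
        field_simp
      linarith [h1, h2]
    -- RIP chain
    have hAuv : A.mulVec u = - A.mulVec v := by
      have h1 : A.mulVec u + A.mulVec v = 0 := by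
        rw [← Matrix.mulVec_add, ← huv, hAh]
      funext i
      have := congrFun h1 i
      simp only [Pi.add_apply, Pi.zero_apply] at this
      simp only [Pi.neg_apply]
      linarith
    have hl1u : l1norm (A.mulVec u) = l1norm (A.mulVec v) := by rw [hAuv, l1norm_neg]
    have hkey := key_lemma A δub hδub ks hks hRIPub h (Rall \ T₁) μ hμ0 hμRT
    have hcμ : c * μ ≤ Y1 / c := by
      rw [le_div_iff₀ hc_pos]
      calc c * μ * c = (c * c) * μ := by ring
        _ = (ks : ℝ) * μ := by rw [hcsq]
        _ ≤ Y1 := hμY1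
    have hkey2 : l1norm (A.mulVec v) ≤ (1 + δub) * (Y / c) := by
      have hdiv : Y1 / c + Y2 / c = Y / c := by
        rw [← add_div, add_comm, hY12]
      rw [hv]
      calc l1norm (A.mulVec (restr h (Rall \ T₁)))
          ≤ (1 + δub) * (c * μ + Y2 / c) := hkey
        _ ≤ (1 + δub) * (Y1 / c + Y2 / c) :=
              mul_le_mul_of_nonneg_left (by linarith [hcμ]) (by linarith)
        _ = (1 + δub) * (Y / c) := by rw [hdiv]
    have huspr : Sparse (ks + s) u := by
      refine ⟨S ∪ T₁, ?_, fun i hi => if_neg hi⟩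
      calc (S ∪ T₁).card ≤ S.card + T₁.card := Finset.card_union_le _ _
        _ ≤ ks + s := by omega
    have hlb := hRIPlb u huspr
    have hmain : (1 - δlb) * X ≤ (1 + δub) * (Y / c) := by
      rw [hl1u] at hlb
      linarith [hlb, hkey2]
    -- conclude X = 0 and Y = 0
    have ha_eq : a * (Real.sqrt s + α) = c - α := by
      rw [ha_def, hc]; field_simp
    have h1δ : (1 + δub) * (Real.sqrt s + α) < (c - α) * (1 - δlb) := by
      have hlt : 1 + δub < a * (1 - δlb) := by
        have : a * (1 - δlb) = a - a * δlb := by ring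
        linarith [hthird, this]
      calc (1 + δub) * (Real.sqrt s + α) < a * (1 - δlb) * (Real.sqrt s + α) :=
            mul_lt_mul_of_pos_right hlt hsa
        _ = (c - α) * (1 - δlb) := by rw [← ha_eq]; ring
    have hX0 : X = 0 := by
      by_contra hne
      have hXpos : 0 < X := lt_of_le_of_ne hXn (Ne.symm hne)
      have h5 : (1 - δlb) * X * c ≤ (1 + δub) * Y := by
        have h6 := mul_le_mul_of_nonneg_right hmain hc_pos.le
        have h7 : (1 + δub) * (Y / c) * c = (1 + δub) * Y := by field_simp
        linarith [h6, h7]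
      have h8 := mul_le_mul_of_nonneg_left hYX (by linarith : (0:ℝ) ≤ 1 + δub)
      have h9 := mul_le_mul_of_nonneg_left h5 (by linarith : (0:ℝ) ≤ c - α)
      have h10 := mul_lt_mul_of_pos_right h1δ (mul_pos hXpos hc_pos)
      linarith [h8, h9, h10]
    have hu0 : ∀ i, u i = 0 := l2norm_eq_zero (by rw [← hX]; exact hX0)
    have hY0 : Y = 0 := by
      have hcα' : 0 < c - α := sub_pos.mpr hcα
      rw [hX0] at hYX
      have h1 : (c - α) * Y ≤ 0 := by linarith [hYX]
      have h2 : 0 ≤ (c - α) * Y := mul_nonneg hcα'.le hYn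
      have h3 : (c - α) * Y = 0 := le_antisymm h1 h2
      rcases mul_eq_zero.mp h3 with h4 | h4
      · exact absurd h4 hcα'.ne'
      · exact h4
    intro i
    by_cases hiS : i ∈ S
    · have := hu0 i
      rw [hu, restr, if_pos (Finset.mem_union_left _ hiS)] at this
      exact this
    · have hiR : i ∈ Rall := by simp [hRall, hiS]
      have := (Finset.sum_eq_zero_iff_of_nonneg
        (fun j _ => abs_nonneg (h j))).mp hY0 i hiR
      exact abs_eq_zero.mp this
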